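/- Let V be a representation of the Clifford algebra Cl(W) for a polarization W = W_cre ⊕ W_ann. If V contains a nonzero vector v_vac with W_ann·v_vac = 0, then the linear map from the Fock space Λ(W_cre) to V sending b₁∧b₂∧…∧b_m ↦ b₁b₂⋯b_m·v_vac is a well-defined injective homomorphism of Cl(W)-modules. -/

import Mathlib

noncomputable section

variable {W : Type*} [AddCommGroup W] [Module ℂ W]

/-- The Fock-space action of a vector `w ∈ W` on `Λ(W_cre)`: the creation part of `w`
acts by left wedging, the annihilation part by contraction against `B`. -/
def fockOp (B : W →ₗ[ℂ] W →ₗ[ℂ] ℂ) (Wcre Wann : Submodule ℂ W)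
    (hc : IsCompl Wcre Wann) (w : W) :
    ExteriorAlgebra ℂ Wcre →ₗ[ℂ] ExteriorAlgebra ℂ Wcre :=
  LinearMap.mulLeft ℂ
      (ExteriorAlgebra.ι ℂ (Submodule.linearProjOfIsCompl Wcre Wann hc w))
    + CliffordAlgebra.contractLeft (Q := (0 : QuadraticForm ℂ ↥Wcre))
        ((B ((Submodule.linearProjOfIsCompl Wann Wcre hc.symm w : Wann) : W)).comp
          Wcre.subtype)

section FockAux

open ExteriorAlgebra CliffordAlgebra DirectSum

variable {M : Type*} [AddCommGroup M] [Module ℂ M]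

/-- Contraction lowers exterior degree by one (and kills degree 0). -/
lemma aux_contract_mem (f : Module.Dual ℂ M) {k : ℕ} {x : ExteriorAlgebra ℂ M}
    (hx : x ∈ ⋀[ℂ]^k M) :
    contractLeft (Q := (0 : QuadraticForm ℂ M)) f x ∈ ⋀[ℂ]^(k-1) M ∧
      (k = 0 → contractLeft (Q := (0 : QuadraticForm ℂ M)) f x = 0) := by
  induction hx using Submodule.pow_induction_on_left' with
  | algebraMap r =>
      rw [contractLeft_algebraMap]
      exact ⟨Submodule.zero_mem _, fun _ => rfl⟩
  | add x y i hx hy ihx ihy =>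
      rw [map_add]
      exact ⟨Submodule.add_mem _ ihx.1 ihy.1, fun h => by rw [ihx.2 h, ihy.2 h, add_zero]⟩
  | mem_mul m hm i x hx ih =>
      obtain ⟨v, rfl⟩ := hm
      rw [contractLeft_ι_mul]
      constructor
      · simp only [Nat.succ_sub_one]
        refine Submodule.sub_mem _ (Submodule.smul_mem _ _ hx) ?_
        cases i with
        | zero => rw [ih.2 rfl, mul_zero]; exact Submodule.zero_mem _
        | succ j =>
            have : (j + 1 : ℕ) - 1 = j := rfl
            rw [this] at ih
            have := Submodule.mul_mem_mul (LinearMap.mem_range_self (ι ℂ (M := M)) v) ih.1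
            rwa [← pow_succ'] at this
      · intro h; exact absurd h (Nat.succ_ne_zero i)

variable {κ : Type*} [Fintype κ] (e : Module.Basis κ ℂ M)

/-- The number operator built from a basis. -/
def auxN : ExteriorAlgebra ℂ M →ₗ[ℂ] ExteriorAlgebra ℂ M :=
  ∑ i, (LinearMap.mulLeft ℂ (ι ℂ (e i))) ∘ₗ
    contractLeft (Q := (0 : QuadraticForm ℂ M)) (e.coord i)

lemma auxN_apply (x : ExteriorAlgebra ℂ M) :
    auxN e x = ∑ i, ι ℂ (e i) *
      contractLeft (Q := (0 : QuadraticForm ℂ M)) (e.coord i) x := by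
  simp [auxN]

lemma aux_ι_anticomm (v w : M) :
    ι ℂ (M := M) v * ι ℂ w = -(ι ℂ w * ι ℂ v) := by
  have h := CliffordAlgebra.ι_mul_ι_add_swap (Q := (0 : QuadraticForm ℂ M)) v w
  have hp : QuadraticMap.polar (0 : QuadraticForm ℂ M) v w = 0 := by
    simp [QuadraticMap.polar]
  rw [hp, map_zero] at h
  linear_combination (norm := noncomm_ring) h

lemma auxN_ι_mul (v : M) (y : ExteriorAlgebra ℂ M) :
    auxN e (ι ℂ v * y) = ι ℂ v * y + ι ℂ v * auxN e y := by
  rw [auxN_apply, auxN_apply]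
  have h1 : ∀ i : κ, ι ℂ (e i) *
      contractLeft (Q := (0 : QuadraticForm ℂ M)) (e.coord i) (ι ℂ v * y)
      = e.coord i v • (ι ℂ (e i) * y)
        + ι ℂ v * (ι ℂ (e i) * contractLeft (Q := (0 : QuadraticForm ℂ M)) (e.coord i) y) := by
    intro i
    rw [contractLeft_ι_mul, mul_sub, mul_smul_comm]
    rw [← mul_assoc, aux_ι_anticomm (e i) v, neg_mul, mul_assoc, sub_neg_eq_add]
  calc ∑ i, ι ℂ (e i) * contractLeft (Q := (0 : QuadraticForm ℂ M)) (e.coord i) (ι ℂ v * y)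
      = ∑ i, (e.coord i v • (ι ℂ (e i) * y)
        + ι ℂ v * (ι ℂ (e i) * contractLeft (Q := (0 : QuadraticForm ℂ M)) (e.coord i) y)) := by
        exact Finset.sum_congr rfl fun i _ => h1 i
    _ = (∑ i, e.coord i v • ι ℂ (e i)) * y
        + ι ℂ v * ∑ i, ι ℂ (e i) * contractLeft (Q := (0 : QuadraticForm ℂ M)) (e.coord i) y := by
        rw [Finset.sum_add_distrib, Finset.sum_mul, Finset.mul_sum]
        simp [smul_mul_assoc]
    _ = _ := by
        congr 2
        simp only [← map_smul, ← map_sum]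
        congr 1
        simp only [Module.Basis.coord_apply]
        exact e.sum_repr v

lemma auxN_grade {k : ℕ} {x : ExteriorAlgebra ℂ M} (hx : x ∈ ⋀[ℂ]^k M) :
    auxN e x = (k : ℂ) • x := by
  induction hx using Submodule.pow_induction_on_left' with
  | algebraMap r =>
      rw [auxN_apply]
      simp [contractLeft_algebraMap]
  | add x y i hx hy ihx ihy => rw [map_add, ihx, ihy, smul_add]
  | mem_mul m hm i x hx ih =>
      obtain ⟨v, rfl⟩ := hm
      rw [auxN_ι_mul, ih, mul_smul_comm]
      push_cast
      rw [add_smul, one_smul]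
      abel

lemma aux_decompose_N (x : ExteriorAlgebra ℂ M) (k : ℕ) :
    (decompose (fun i : ℕ => ⋀[ℂ]^i M) (auxN e x) k : ExteriorAlgebra ℂ M)
      = (k : ℂ) • (decompose (fun i : ℕ => ⋀[ℂ]^i M) x k : ExteriorAlgebra ℂ M) := by
  classical
  set ℳ : ℕ → Submodule ℂ (ExteriorAlgebra ℂ M) := fun i => ⋀[ℂ]^i M with hℳ
  have h1 : auxN e x = ∑ i ∈ (decompose ℳ x).support,
      (i : ℂ) • ((decompose ℳ x i : ExteriorAlgebra ℂ M)) := by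
    conv_lhs => rw [← DirectSum.sum_support_decompose ℳ x]
    rw [map_sum]
    exact Finset.sum_congr rfl fun i _ => auxN_grade e (decompose ℳ x i).2
  rw [h1]
  have h2 : decompose ℳ (∑ i ∈ (decompose ℳ x).support,
      (i : ℂ) • ((decompose ℳ x i : ExteriorAlgebra ℂ M)))
      = ∑ i ∈ (decompose ℳ x).support,
        (i : ℂ) • DirectSum.of (fun i => ℳ i) i (decompose ℳ x i) := by
    rw [decompose_sum]
    refine Finset.sum_congr rfl fun i _ => ?_
    rw [decompose_smul, decompose_coe]
  rw [h2]
  rw [DFinsupp.finset_sum_apply]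
  by_cases hk : k ∈ (decompose ℳ x).support
  · rw [Finset.sum_eq_single k
      (fun j _ hj => by rw [DFinsupp.smul_apply, of_eq_of_ne _ _ _ hj.symm, smul_zero])
      (fun h => absurd hk h)]
    rw [DFinsupp.smul_apply, of_eq_same]
    simp
    rfl
  · have hx0 : (decompose ℳ x) k = 0 := DFinsupp.notMem_support_iff.mp hk
    rw [Finset.sum_eq_zero (fun j hj => by
      have hjk : j ≠ k := fun h => hk (h ▸ hj)
      rw [DFinsupp.smul_apply, of_eq_of_ne _ _ _ hjk.symm, smul_zero]), hx0]
    simp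

lemma aux_component_mem (K : Submodule ℂ (ExteriorAlgebra ℂ M))
    (hKN : ∀ x ∈ K, auxN e x ∈ K) :
    ∀ x ∈ K, ∀ k : ℕ,
      (decompose (fun i : ℕ => ⋀[ℂ]^i M) x k : ExteriorAlgebra ℂ M) ∈ K := by
  classical
  set ℳ : ℕ → Submodule ℂ (ExteriorAlgebra ℂ M) := fun i => ⋀[ℂ]^i M with hℳ
  suffices H : ∀ s : Finset ℕ, ∀ x ∈ K, (decompose ℳ x).support ⊆ s →
      ∀ k : ℕ, (decompose ℳ x k : ExteriorAlgebra ℂ M) ∈ K by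
    exact fun x hx k => H _ x hx (Finset.Subset.refl _) k
  intro s
  induction s using Finset.induction_on with
  | empty =>
      intro x hx hsupp k
      have h0 : decompose ℳ x k = 0 := by
        refine DFinsupp.notMem_support_iff.mp fun h => ?_
        exact absurd (hsupp h) (Finset.notMem_empty k)
      rw [h0, Submodule.coe_zero]
      exact K.zero_mem
  | @insert a s ha ih =>
      intro x hx hsupp k
      set y : ExteriorAlgebra ℂ M := auxN e x - (a : ℂ) • x with hy
      have hyK : y ∈ K := K.sub_mem (hKN x hx) (K.smul_mem _ hx)
      have hyd : ∀ j : ℕ, (decompose ℳ y j : ExteriorAlgebra ℂ M)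
          = ((j : ℂ) - a) • (decompose ℳ x j : ExteriorAlgebra ℂ M) := by
        intro j
        rw [hy, decompose_sub, decompose_smul, DFinsupp.sub_apply, DFinsupp.smul_apply,
          Submodule.coe_sub, Submodule.coe_smul, aux_decompose_N, sub_smul]
      have hsuppy : (decompose ℳ y).support ⊆ s := by
        intro j hj
        have hjne : (decompose ℳ y j : ExteriorAlgebra ℂ M) ≠ 0 := by
          intro h0
          apply DFinsupp.mem_support_iff.mp hj
          exact Subtype.ext h0
        rw [hyd j] at hjne
        have hja : j ≠ a := by
          rintro rfl
          rw [sub_self, zero_smul] at hjne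
          exact hjne rfl
        have hjx : j ∈ (decompose ℳ x).support := by
          rw [DFinsupp.mem_support_iff]
          intro h0
          apply hjne
          rw [h0, Submodule.coe_zero, smul_zero]
        have := hsupp hjx
        rcases Finset.mem_insert.mp this with h | h
        · exact absurd h hja
        · exact h
      have hyc : ∀ j : ℕ, (decompose ℳ y j : ExteriorAlgebra ℂ M) ∈ K :=
        fun j => ih y hyK hsuppy j
      have hne : ∀ j : ℕ, j ≠ a → (decompose ℳ x j : ExteriorAlgebra ℂ M) ∈ K := by
        intro j hja
        have hca : ((j : ℂ) - a) ≠ 0 := by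
          intro h0
          apply hja
          have : (j : ℂ) = a := by linear_combination h0
          exact_mod_cast this
        have := K.smul_mem (((j : ℂ) - a)⁻¹) (hyc j)
        rw [hyd j, smul_smul, inv_mul_cancel₀ hca, one_smul] at this
        exact this
      by_cases hka : k = a
      · subst hka
        by_cases hks : k ∈ (decompose ℳ x).support
        · have hxsum : (∑ i ∈ (decompose ℳ x).support,
              (decompose ℳ x i : ExteriorAlgebra ℂ M)) = x :=
            DirectSum.sum_support_decompose ℳ x
          have h2 : (decompose ℳ x k : ExteriorAlgebra ℂ M)
              + ∑ i ∈ (decompose ℳ x).support.erase k,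
                  (decompose ℳ x i : ExteriorAlgebra ℂ M) = x := by
            rw [Finset.add_sum_erase _ (fun i => (decompose ℳ x i : ExteriorAlgebra ℂ M)) hks]
            exact hxsum
          rw [eq_sub_of_add_eq h2]
          refine K.sub_mem hx (Submodule.sum_mem _ fun j hj => ?_)
          exact hne j (Finset.ne_of_mem_erase hj)
        · have h0 : decompose ℳ x k = 0 := DFinsupp.notMem_support_iff.mp hks
          rw [h0, Submodule.coe_zero]
          exact K.zero_mem
      · exact hne k hka

end FockAux

open ExteriorAlgebra CliffordAlgebra DirectSum

set_option maxHeartbeats 1600000 in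
set_option synthInstance.maxHeartbeats 200000 in
/-- A representation of the Clifford relations containing a nonzero vector annihilated by
`W_ann` contains an embedded copy of the Fock representation, via
`b₁∧…∧b_m ↦ b₁⋯b_m·v_vac`. -/
theorem fock_embeds_in_module_with_vacuum
    [FiniteDimensional ℂ W]
    (B : W →ₗ[ℂ] W →ₗ[ℂ] ℂ)
    (hsymm : ∀ u v : W, B u v = B v u)
    (hnondeg : ∀ u : W, (∀ v : W, B u v = 0) → u = 0)
    (Wcre Wann : Submodule ℂ W) (hc : IsCompl Wcre Wann)
    (hcre : ∀ u ∈ Wcre, ∀ v ∈ Wcre, B u v = 0)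
    (hann : ∀ u ∈ Wann, ∀ v ∈ Wann, B u v = 0)
    {V : Type*} [AddCommGroup V] [Module ℂ V]
    (ρ : W → (V →ₗ[ℂ] V))
    (hρlin : ∀ (c : ℂ) (u v : W), ρ (c • u + v) = c • ρ u + ρ v)
    (hρ : ∀ u v : W, ρ u ∘ₗ ρ v + ρ v ∘ₗ ρ u = B u v • LinearMap.id)
    (vvac : V) (hvac_ne : vvac ≠ 0)
    (hvac : ∀ a : W, a ∈ Wann → ρ a vvac = 0) :
    ∃ Φ : ExteriorAlgebra ℂ Wcre →ₗ[ℂ] V,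
      Φ 1 = vvac ∧
      (∀ (b : Wcre) (x : ExteriorAlgebra ℂ Wcre),
        Φ (ExteriorAlgebra.ι ℂ b * x) = ρ (b : W) (Φ x)) ∧
      Function.Injective Φ ∧
      (∀ (w : W) (x : ExteriorAlgebra ℂ Wcre),
        Φ (fockOp B Wcre Wann hc w x) = ρ w (Φ x)) := by
  classical
  -- basic linearity of ρ
  have hρ0 : ρ 0 = 0 := by
    have h := hρlin 1 0 0
    simp only [one_smul, add_zero] at h
    exact (by simpa using h)
  have hρadd : ∀ u v : W, ρ (u + v) = ρ u + ρ v := fun u v => by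
    have h := hρlin 1 u v; rwa [one_smul, one_smul] at h
  have hρsmul : ∀ (c : ℂ) (u : W), ρ (c • u) = c • ρ u := fun c u => by
    have h := hρlin c u 0; rwa [add_zero, hρ0, add_zero] at h
  -- the algebra map
  let ρ' : ↥Wcre →ₗ[ℂ] (V →ₗ[ℂ] V) :=
    { toFun := fun m => ρ (m : W)
      map_add' := fun u v => by simp only [Submodule.coe_add, hρadd]
      map_smul' := fun c u => by
        simp only [Submodule.coe_smul, hρsmul, RingHom.id_apply] }
  have hsq : ∀ m : ↥Wcre, ρ' m * ρ' m = 0 := by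
    intro m
    have h := hρ (m : W) (m : W)
    rw [hcre _ m.2 _ m.2, zero_smul] at h
    have h2 : (2 : ℂ) • (ρ (m : W) ∘ₗ ρ (m : W)) = 0 := by rw [two_smul]; exact h
    have h3 := (smul_eq_zero.mp h2).resolve_left (by norm_num)
    show ρ (m : W) ∘ₗ ρ (m : W) = 0
    exact h3
  let π : ExteriorAlgebra ℂ ↥Wcre →ₐ[ℂ] (V →ₗ[ℂ] V) := ExteriorAlgebra.lift ℂ ⟨ρ', hsq⟩
  let Φ : ExteriorAlgebra ℂ ↥Wcre →ₗ[ℂ] V :=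
    { toFun := fun x => π x vvac
      map_add' := fun x y => by simp only [map_add, LinearMap.add_apply]
      map_smul' := fun c x => by
        simp only [map_smul, LinearMap.smul_apply, RingHom.id_apply] }
  have hΦ1 : Φ 1 = vvac := by show π 1 vvac = vvac; rw [map_one]; rfl
  have hΦι : ∀ (b : ↥Wcre) (x : ExteriorAlgebra ℂ ↥Wcre),
      Φ (ExteriorAlgebra.ι ℂ b * x) = ρ (b : W) (Φ x) := by
    intro b x
    show π (ExteriorAlgebra.ι ℂ b * x) vvac = _
    rw [map_mul, Module.End.mul_apply, ExteriorAlgebra.lift_ι_apply]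
    rfl
  have hΦalg : ∀ r : ℂ, Φ (algebraMap ℂ _ r) = r • vvac := by
    intro r
    show π (algebraMap ℂ _ r) vvac = r • vvac
    rw [AlgHom.commutes]
    rfl
  -- the annihilation property
  have hann_key : ∀ a : W, a ∈ Wann → ∀ x : ExteriorAlgebra ℂ ↥Wcre,
      ρ a (Φ x) = Φ (contractLeft (Q := (0 : QuadraticForm ℂ ↥Wcre))
        ((B a).comp Wcre.subtype) x) := by
    intro a haW x
    have hιeq : (ExteriorAlgebra.ι ℂ : ↥Wcre →ₗ[ℂ] ExteriorAlgebra ℂ ↥Wcre)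
        = CliffordAlgebra.ι (0 : QuadraticForm ℂ ↥Wcre) := rfl
    induction x using CliffordAlgebra.left_induction with
    | algebraMap r =>
        rw [hΦalg, contractLeft_algebraMap, map_zero, map_smul, hvac a haW, smul_zero]
    | add x y hx hy =>
        rw [map_add Φ, map_add (ρ a), hx, hy, map_add, map_add]
    | ι_mul x m hx =>
        rw [← hιeq, hΦι m x, contractLeft_ι_mul, map_sub, map_smul, hΦι m, ← hx]
        have h := hρ a (m : W)
        have h2 := LinearMap.congr_fun h (Φ x)
        simp only [LinearMap.add_apply, LinearMap.comp_apply, LinearMap.smul_apply,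
          LinearMap.id_apply] at h2
        have h3 : ρ a (ρ (m : W) (Φ x)) = B a (m : W) • Φ x - ρ (m : W) (ρ a (Φ x)) :=
          eq_sub_of_add_eq h2
        rw [h3]
        rfl
  -- fockOp intertwining
  have hadd2 : ∀ (u v : W) (z : V), ρ u z + ρ v z = ρ (u + v) z := by
    intro u v z; rw [hρadd]; rfl
  have hfock : ∀ (w : W) (x : ExteriorAlgebra ℂ ↥Wcre),
      Φ (fockOp B Wcre Wann hc w x) = ρ w (Φ x) := by
    intro w x
    show Φ (ExteriorAlgebra.ι ℂ (Submodule.linearProjOfIsCompl Wcre Wann hc w) * x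
      + contractLeft (Q := (0 : QuadraticForm ℂ ↥Wcre))
        ((B ((Submodule.linearProjOfIsCompl Wann Wcre hc.symm w : Wann) : W)).comp
          Wcre.subtype) x) = ρ w (Φ x)
    rw [map_add, hΦι,
      ← hann_key _ (Submodule.coe_mem (Submodule.linearProjOfIsCompl Wann Wcre hc.symm w)) x,
      hadd2]
    congr 2
    exact Submodule.projection_add_projection_eq_self hc w
  -- surjectivity onto the dual
  have hdualsurj : ∀ f : Module.Dual ℂ ↥Wcre,
      ∃ a : W, a ∈ Wann ∧ (B a).comp Wcre.subtype = f := by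
    let T : ↥Wann →ₗ[ℂ] Module.Dual ℂ ↥Wcre :=
      { toFun := fun a => (B (a : W)).comp Wcre.subtype
        map_add' := fun u v => by ext m; simp
        map_smul' := fun c u => by ext m; simp }
    let T' : ↥Wcre →ₗ[ℂ] Module.Dual ℂ ↥Wann :=
      { toFun := fun m => (B (m : W)).comp Wann.subtype
        map_add' := fun u v => by ext m; simp
        map_smul' := fun c u => by ext m; simp }
    have hdecomp : ∀ v : W, ∃ c ∈ Wcre, ∃ d ∈ Wann, c + d = v := by
      intro v
      have : v ∈ Wcre ⊔ Wann := by rw [hc.sup_eq_top]; trivial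
      obtain ⟨c, hcm, d, hdm, hcd⟩ := Submodule.mem_sup.mp this
      exact ⟨c, hcm, d, hdm, hcd⟩
    have hTinj : Function.Injective T := by
      rw [← LinearMap.ker_eq_bot, LinearMap.ker_eq_bot']
      intro a haT
      have hz : ∀ v : W, B (a : W) v = 0 := by
        intro v
        obtain ⟨cc, hcc, d, hd, rfl⟩ := hdecomp v
        rw [map_add]
        have h1 : B (a : W) cc = 0 := by
          have := LinearMap.congr_fun haT ⟨cc, hcc⟩
          simpa [T] using this
        have h2 : B (a : W) d = 0 := hann _ a.2 _ hd
        rw [h1, h2, add_zero]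
      exact Subtype.ext (hnondeg _ hz)
    have hT'inj : Function.Injective T' := by
      rw [← LinearMap.ker_eq_bot, LinearMap.ker_eq_bot']
      intro m hmT
      have hz : ∀ v : W, B (m : W) v = 0 := by
        intro v
        obtain ⟨cc, hcc, d, hd, rfl⟩ := hdecomp v
        rw [map_add]
        have h1 : B (m : W) cc = 0 := hcre _ m.2 _ hcc
        have h2 : B (m : W) d = 0 := by
          have := LinearMap.congr_fun hmT ⟨d, hd⟩
          simpa [T'] using this
        rw [h1, h2, add_zero]
      exact Subtype.ext (hnondeg _ hz)
    have hfr1 : Module.finrank ℂ ↥Wann ≤ Module.finrank ℂ ↥Wcre := by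
      have := LinearMap.finrank_le_finrank_of_injective hTinj
      rwa [Subspace.dual_finrank_eq] at this
    have hfr2 : Module.finrank ℂ ↥Wcre ≤ Module.finrank ℂ ↥Wann := by
      have := LinearMap.finrank_le_finrank_of_injective hT'inj
      rwa [Subspace.dual_finrank_eq] at this
    have hfr : Module.finrank ℂ ↥Wann = Module.finrank ℂ (Module.Dual ℂ ↥Wcre) := by
      rw [Subspace.dual_finrank_eq]
      exact le_antisymm hfr1 hfr2
    have hTsurj : Function.Surjective T :=
      (LinearMap.injective_iff_surjective_of_finrank_eq_finrank hfr).mp hTinj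
    intro f
    obtain ⟨a, ha⟩ := hTsurj f
    exact ⟨(a : W), a.2, ha⟩
  -- kernel closure properties
  have hKι : ∀ (m : ↥Wcre) (x : ExteriorAlgebra ℂ ↥Wcre), x ∈ LinearMap.ker Φ →
      ExteriorAlgebra.ι ℂ m * x ∈ LinearMap.ker Φ := by
    intro m x hx
    rw [LinearMap.mem_ker] at hx ⊢
    rw [hΦι, hx, map_zero]
  have hKc : ∀ (f : Module.Dual ℂ ↥Wcre) (x : ExteriorAlgebra ℂ ↥Wcre),
      x ∈ LinearMap.ker Φ →
      contractLeft (Q := (0 : QuadraticForm ℂ ↥Wcre)) f x ∈ LinearMap.ker Φ := by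
    intro f x hx
    obtain ⟨a, haW, rfl⟩ := hdualsurj f
    rw [LinearMap.mem_ker, ← hann_key a haW x, LinearMap.mem_ker.mp hx, map_zero]
  let e : Module.Basis (Fin (Module.finrank ℂ ↥Wcre)) ℂ ↥Wcre := Module.finBasis ℂ ↥Wcre
  have hKN : ∀ x ∈ LinearMap.ker Φ, auxN e x ∈ LinearMap.ker Φ := by
    intro x hx
    rw [auxN_apply]
    exact Submodule.sum_mem _ fun i _ => hKι _ _ (hKc _ _ hx)
  have hK0 : ∀ c : ℂ, algebraMap ℂ (ExteriorAlgebra ℂ ↥Wcre) c ∈ LinearMap.ker Φ → c = 0 := by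
    intro c hcK
    have h := LinearMap.mem_ker.mp hcK
    rw [hΦalg] at h
    rcases smul_eq_zero.mp h with h | h
    · exact h
    · exact absurd h hvac_ne
  -- injectivity
  have hinj : Function.Injective Φ := by
    rw [← LinearMap.ker_eq_bot]
    by_contra hne
    obtain ⟨x, hxK, hx0⟩ := Submodule.exists_mem_ne_zero_of_ne_bot hne
    have hcomp := aux_component_mem e (LinearMap.ker Φ) hKN
    have hex : ∃ k : ℕ, (decompose (fun i : ℕ => ⋀[ℂ]^i ↥Wcre) x k :
        ExteriorAlgebra ℂ ↥Wcre) ≠ 0 := by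
      by_contra h
      push_neg at h
      apply hx0
      rw [← DirectSum.sum_support_decompose (fun i : ℕ => ⋀[ℂ]^i ↥Wcre) x]
      exact Finset.sum_eq_zero fun i _ => h i
    have hP : ∃ k : ℕ, ∃ y : ExteriorAlgebra ℂ ↥Wcre,
        y ∈ LinearMap.ker Φ ∧ y ∈ ⋀[ℂ]^k ↥Wcre ∧ y ≠ 0 := by
      obtain ⟨k, hk⟩ := hex
      exact ⟨k, _, hcomp x hxK k, (decompose (fun i : ℕ => ⋀[ℂ]^i ↥Wcre) x k).2, hk⟩
    obtain ⟨y, hyK, hy_mem, hy0⟩ := Nat.find_spec hP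
    rcases hk0 : Nat.find hP with _ | k
    · rw [hk0] at hy_mem
      have : y ∈ (1 : Submodule ℂ (ExteriorAlgebra ℂ ↥Wcre)) := by
        rw [← pow_zero (LinearMap.range (ExteriorAlgebra.ι ℂ : ↥Wcre →ₗ[ℂ]
          ExteriorAlgebra ℂ ↥Wcre))]
        exact hy_mem
      obtain ⟨c, hcy⟩ := Submodule.mem_one.mp this
      apply hy0
      rw [← hcy, hK0 c (by rwa [hcy]), map_zero]
    · rw [hk0] at hy_mem
      have hcontr : ∀ f : Module.Dual ℂ ↥Wcre,
          contractLeft (Q := (0 : QuadraticForm ℂ ↥Wcre)) f y = 0 := by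
        intro f
        by_contra h0
        have hmem := (aux_contract_mem f hy_mem).1
        have hPk : ∃ y : ExteriorAlgebra ℂ ↥Wcre,
            y ∈ LinearMap.ker Φ ∧ y ∈ ⋀[ℂ]^k ↥Wcre ∧ y ≠ 0 :=
          ⟨_, hKc f y hyK, by simpa using hmem, h0⟩
        exact Nat.find_min hP (by omega) hPk
      have hNy : auxN e y = 0 := by
        rw [auxN_apply]
        exact Finset.sum_eq_zero fun i _ => by rw [hcontr, mul_zero]
      rw [auxN_grade e hy_mem] at hNy
      rcases smul_eq_zero.mp hNy with h | h
      · exact absurd h (by exact_mod_cast Nat.succ_ne_zero k)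
      · exact hy0 h
  exact ⟨Φ, hΦ1, hΦι, hinj, hfock⟩

end
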